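/- For the Besse ellipsoid $E(a)$ with common period $\tau$ (a multiple of the minimal common period $\tau_0=\mathrm{lcm}(a_1,\dots,a_n)$), every $\tau$-periodic Reeb orbit has Conley--Zehnder index $\mu=2(\tau/a_1+\cdots+\tau/a_n)-n$, and setting $i=(\mu-n)/2$ one has $i=\sum_{h=1}^n(\tau/a_h-1)$ and $\tau=c_i(\Sigma)=c_{i+n-1}(\Sigma)$, where $c_{i-1}(\Sigma)$ is the $i$-th element of the non-decreasing list of all positive multiples of $a_1,\dots,a_n$ with multiplicity. -/

import Mathlib

open scoped BigOperators

lemma besse_card_aux (n : ℕ) (K : Fin n → ℕ) (P : ℕ × Fin n → Prop)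
    [DecidablePred P] (hP : ∀ p : ℕ × Fin n, P p ↔ 0 < p.1 ∧ p.1 ≤ K p.2) :
    Nat.card {p : ℕ × Fin n // P p} = ∑ h : Fin n, K h := by
  have e : {p : ℕ × Fin n // P p} ≃ Σ h : Fin n, Fin (K h) :=
    { toFun := fun p => ⟨p.1.2, ⟨p.1.1 - 1, by have := (hP p.1).1 p.2; omega⟩⟩
      invFun := fun x => ⟨(x.2.1 + 1, x.1), (hP _).2 ⟨Nat.succ_pos _, by
        have := x.2.2; simp only; omega⟩⟩
      left_inv := by
        rintro ⟨⟨k, h⟩, hp⟩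
        have := (hP (k, h)).1 hp
        simp only [Subtype.mk.injEq, Prod.mk.injEq]
        constructor
        · omega
        · trivial
      right_inv := by
        rintro ⟨h, j⟩
        simp }
  rw [Nat.card_congr e, Nat.card_eq_fintype_card, Fintype.card_sigma]
  simp

/-- **Spectral invariants of Besse ellipsoids at a common period.**
For the Besse ellipsoid `E(a)` (parameters `0 < a_1, …, a_n` with pairwise rational
ratios) and a common period `τ` of the Reeb flow (so `τ/a_h = K_h` is a positive
integer for every `h`), every `τ`-periodic Reeb orbit has Conley–Zehnder index
`μ = 2(τ/a_1 + ⋯ + τ/a_n) - n`, and setting `i = (μ - n)/2` one has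
`i = ∑_h (τ/a_h - 1)` and `τ = c_i(Σ) = c_{i+n-1}(Σ)`, where `c_{i-1}(Σ)` is the
`i`-th element of the non-decreasing list of all positive multiples of
`a_1, …, a_n` with multiplicity. The last equalities are expressed by the rank
characterization: exactly `i` elements of the multiset `{k a_h}` are `< τ` and
exactly `i + n` are `≤ τ`. -/
theorem besse_ellipsoid_spectral_coincidence (n : ℕ) (hn : 1 ≤ n)
    (a : Fin n → ℝ) (ha : ∀ h, 0 < a h)
    (hrat : ∀ h h', ∃ q : ℚ, a h = (q : ℝ) * a h')
    (τ : ℝ) (K : Fin n → ℕ)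
    (hK : ∀ h, 0 < K h ∧ τ = (K h : ℝ) * a h)
    (μ : ℤ) (hμ : μ = 2 * (∑ h : Fin n, (K h : ℤ)) - n)
    (i : ℤ) (hi : i = (μ - n) / 2) :
    i = ∑ h : Fin n, ((K h : ℤ) - 1) ∧
    0 ≤ i ∧
    (Nat.card {p : ℕ × Fin n // 0 < p.1 ∧ (p.1 : ℝ) * a p.2 < τ} : ℤ) = i ∧
    (Nat.card {p : ℕ × Fin n // 0 < p.1 ∧ (p.1 : ℝ) * a p.2 ≤ τ} : ℤ) = i + n := by
  classical
  set S : ℤ := ∑ h : Fin n, (K h : ℤ) with hS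
  have hiS : i = S - n := by omega
  have hsum : ∑ h : Fin n, ((K h : ℤ) - 1) = S - n := by
    rw [Finset.sum_sub_distrib]
    simp [hS]
  have hlt : ∀ p : ℕ × Fin n,
      (0 < p.1 ∧ (p.1 : ℝ) * a p.2 < τ) ↔ (0 < p.1 ∧ p.1 ≤ K p.2 - 1) := by
    rintro ⟨k, h⟩
    obtain ⟨hK1, hK2⟩ := hK h
    simp only
    rw [hK2, mul_lt_mul_iff_left₀ (ha h), Nat.cast_lt]
    omega
  have hle : ∀ p : ℕ × Fin n,
      (0 < p.1 ∧ (p.1 : ℝ) * a p.2 ≤ τ) ↔ (0 < p.1 ∧ p.1 ≤ K p.2) := by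
    rintro ⟨k, h⟩
    obtain ⟨hK1, hK2⟩ := hK h
    simp only
    rw [hK2, mul_le_mul_iff_left₀ (ha h), Nat.cast_le]
  have c1 : Nat.card {p : ℕ × Fin n // 0 < p.1 ∧ (p.1 : ℝ) * a p.2 < τ}
      = ∑ h : Fin n, (K h - 1) := besse_card_aux n (fun h => K h - 1) _ hlt
  have c2 : Nat.card {p : ℕ × Fin n // 0 < p.1 ∧ (p.1 : ℝ) * a p.2 ≤ τ}
      = ∑ h : Fin n, K h := besse_card_aux n K _ hle
  have hcast1 : ((∑ h : Fin n, (K h - 1) : ℕ) : ℤ) = S - n := by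
    rw [Nat.cast_sum]
    rw [hS, ← hsum]
    apply Finset.sum_congr rfl
    intro h _
    have := (hK h).1
    omega
  have hcast2 : ((∑ h : Fin n, K h : ℕ) : ℤ) = S := by
    rw [Nat.cast_sum]
  have hpos : 0 ≤ S - n := by
    have : ∀ h : Fin n, (1 : ℤ) ≤ K h := fun h => by exact_mod_cast (hK h).1
    have := Finset.sum_le_sum (fun h (_ : h ∈ Finset.univ) => this h)
    simp only [Finset.sum_const, Finset.card_univ, Fintype.card_fin, smul_eq_mul,
      mul_one] at this
    omega
  refine ⟨by rw [hiS, hsum], by omega, ?_, ?_⟩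
  · rw [c1, hcast1, hiS]
  · rw [c2, hcast2, hiS]; ring
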